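/- Suppose H(t) is a family of symmetric n×n real matrices depending continuously on t ∈ [0, t*], such that H(0) is positive semidefinite. Then the number of negative eigenvalues of H(t*) (counted with multiplicity) is at most the sum over t ∈ [0, t*) at which H(t) is singular of the dimension of the kernel of H(t), provided this set of singular times is finite. -/

import Mathlib

open Matrix Module Finset

namespace Stmt3Aux

variable {n : ℕ}

/-! ### Quadratic form expansion in the eigenbasis -/

theorem quad_expand {A : Matrix (Fin n) (Fin n) ℝ} (hA : A.IsHermitian)
    (x : EuclideanSpace ℝ (Fin n)) :
    (x : Fin n → ℝ) ⬝ᵥ A *ᵥ (x : Fin n → ℝ) =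
      ∑ i, hA.eigenvalues i * (hA.eigenvectorBasis.repr x i)^2 := by
  set b := hA.eigenvectorBasis with hb
  have hx : (∑ i, b.repr x i • b i) = x := b.sum_repr x
  have hmv : A *ᵥ (x : Fin n → ℝ) = ∑ i, (hA.eigenvalues i * b.repr x i) • (b i : Fin n → ℝ) := by
    conv_lhs => rw [← hx]
    rw [show ((∑ i, b.repr x i • b i : EuclideanSpace ℝ (Fin n)) : Fin n → ℝ)
        = ∑ i, b.repr x i • (b i : Fin n → ℝ) by simp]
    rw [← mulVecLin_apply, map_sum]
    congr 1; funext i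
    rw [_root_.map_smul, mulVecLin_apply]; erw [hA.mulVec_eigenvectorBasis]
    rw [smul_smul, mul_comm]
  rw [hmv]
  rw [show ((x : Fin n → ℝ) ⬝ᵥ ∑ i, (hA.eigenvalues i * b.repr x i) • (b i : Fin n → ℝ))
      = ∑ i, (x : Fin n → ℝ) ⬝ᵥ ((hA.eigenvalues i * b.repr x i) • (b i : Fin n → ℝ)) by
    simp [dotProduct, Finset.mul_sum, Finset.sum_apply]; rw [Finset.sum_comm]]
  congr 1; funext i
  rw [dotProduct_smul]
  have : (x : Fin n → ℝ) ⬝ᵥ (b i : Fin n → ℝ) = b.repr x i := by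
    rw [b.repr_apply_apply]
    rw [real_inner_comm]
    simp [EuclideanSpace.inner_eq_star_dotProduct]
    exact dotProduct_comm _ _
  rw [this]; simp [smul_eq_mul]; ring

/-! ### Spans of eigenvectors -/

noncomputable def eigSpan {A : Matrix (Fin n) (Fin n) ℝ} (hA : A.IsHermitian)
    (p : Fin n → Prop) [DecidablePred p] : Submodule ℝ (EuclideanSpace ℝ (Fin n)) :=
  Submodule.span ℝ (Set.range fun i : {i // p i} => hA.eigenvectorBasis i)

theorem finrank_eigSpan {A : Matrix (Fin n) (Fin n) ℝ} (hA : A.IsHermitian)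
    (p : Fin n → Prop) [DecidablePred p] :
    finrank ℝ (eigSpan hA p) = (univ.filter p).card := by
  have hli : LinearIndependent ℝ (fun i : {i // p i} => hA.eigenvectorBasis i) := by
    have := (hA.eigenvectorBasis.toBasis.linearIndependent).comp
      (Subtype.val : {i // p i} → Fin n) Subtype.val_injective
    exact this
  rw [eigSpan, finrank_span_eq_card hli]
  simp [Fintype.card_subtype]

theorem repr_eq_zero_of_mem_eigSpan {A : Matrix (Fin n) (Fin n) ℝ} (hA : A.IsHermitian)
    (p : Fin n → Prop) [DecidablePred p]
    {x : EuclideanSpace ℝ (Fin n)} (hx : x ∈ eigSpan hA p) {i : Fin n} (hi : ¬ p i) :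
    hA.eigenvectorBasis.repr x i = 0 := by
  induction hx using Submodule.span_induction with
  | mem x hx =>
      obtain ⟨j, rfl⟩ := hx
      rw [OrthonormalBasis.repr_self, EuclideanSpace.single_apply]
      simp only [ite_eq_right_iff]
      intro h; exact absurd (h ▸ j.2) hi
  | zero => simp
  | add x y _ _ hx hy => simp [hx, hy]
  | smul c x _ hx => simp [hx]

theorem quad_neg_of_mem {A : Matrix (Fin n) (Fin n) ℝ} (hA : A.IsHermitian)
    {x : EuclideanSpace ℝ (Fin n)}
    (hx : x ∈ eigSpan hA (fun i => hA.eigenvalues i < 0)) (hx0 : x ≠ 0) :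
    (x : Fin n → ℝ) ⬝ᵥ A *ᵥ (x : Fin n → ℝ) < 0 := by
  rw [quad_expand hA x]
  obtain ⟨i, hi⟩ : ∃ i, hA.eigenvectorBasis.repr x i ≠ 0 := by
    by_contra h; push_neg at h
    exact hx0 (by simpa using hA.eigenvectorBasis.repr.map_eq_zero_iff.mp (by ext j; simpa using h j))
  have hpi : hA.eigenvalues i < 0 := by
    by_contra h; exact hi (repr_eq_zero_of_mem_eigSpan hA _ hx h)
  have hle : ∀ j ∈ univ, hA.eigenvalues j * (hA.eigenvectorBasis.repr x j)^2 ≤ 0 := by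
    intro j _
    rcases em (hA.eigenvalues j < 0) with h | h
    · exact mul_nonpos_of_nonpos_of_nonneg h.le (sq_nonneg _)
    · rw [repr_eq_zero_of_mem_eigSpan hA _ hx h]; simp
  calc ∑ j, hA.eigenvalues j * (hA.eigenvectorBasis.repr x j)^2
      < ∑ _j : Fin n, (0:ℝ) := by
        apply Finset.sum_lt_sum hle
        exact ⟨i, mem_univ i, mul_neg_of_neg_of_pos hpi (by positivity)⟩
    _ = 0 := by simp

theorem quad_pos_of_mem {A : Matrix (Fin n) (Fin n) ℝ} (hA : A.IsHermitian)
    {x : EuclideanSpace ℝ (Fin n)}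
    (hx : x ∈ eigSpan hA (fun i => 0 < hA.eigenvalues i)) (hx0 : x ≠ 0) :
    0 < (x : Fin n → ℝ) ⬝ᵥ A *ᵥ (x : Fin n → ℝ) := by
  rw [quad_expand hA x]
  obtain ⟨i, hi⟩ : ∃ i, hA.eigenvectorBasis.repr x i ≠ 0 := by
    by_contra h; push_neg at h
    exact hx0 (by simpa using hA.eigenvectorBasis.repr.map_eq_zero_iff.mp (by ext j; simpa using h j))
  have hpi : 0 < hA.eigenvalues i := by
    by_contra h; exact hi (repr_eq_zero_of_mem_eigSpan hA _ hx h)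
  have hle : ∀ j ∈ univ, 0 ≤ hA.eigenvalues j * (hA.eigenvectorBasis.repr x j)^2 := by
    intro j _
    rcases em (0 < hA.eigenvalues j) with h | h
    · positivity
    · rw [repr_eq_zero_of_mem_eigSpan hA _ hx h]; simp
  calc (0:ℝ) = ∑ _j : Fin n, (0:ℝ) := by simp
    _ < _ := Finset.sum_lt_sum hle ⟨i, mem_univ i, mul_pos hpi (by positivity)⟩

theorem quad_nonneg_of_mem {A : Matrix (Fin n) (Fin n) ℝ} (hA : A.IsHermitian)
    {x : EuclideanSpace ℝ (Fin n)}
    (hx : x ∈ eigSpan hA (fun i => 0 ≤ hA.eigenvalues i)) :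
    0 ≤ (x : Fin n → ℝ) ⬝ᵥ A *ᵥ (x : Fin n → ℝ) := by
  rw [quad_expand hA x]
  apply Finset.sum_nonneg
  intro j _
  rcases em (0 ≤ hA.eigenvalues j) with h | h
  · positivity
  · rw [repr_eq_zero_of_mem_eigSpan hA _ hx h]; simp

theorem quad_nonpos_of_mem {A : Matrix (Fin n) (Fin n) ℝ} (hA : A.IsHermitian)
    {x : EuclideanSpace ℝ (Fin n)}
    (hx : x ∈ eigSpan hA (fun i => hA.eigenvalues i ≤ 0)) :
    (x : Fin n → ℝ) ⬝ᵥ A *ᵥ (x : Fin n → ℝ) ≤ 0 := by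
  rw [quad_expand hA x]
  apply Finset.sum_nonpos
  intro j _
  rcases em (hA.eigenvalues j ≤ 0) with h | h
  · exact mul_nonpos_of_nonpos_of_nonneg h (sq_nonneg _)
  · rw [repr_eq_zero_of_mem_eigSpan hA _ hx h]; simp

/-! ### Counting lemmas -/

theorem finrank_le_card_neg {A : Matrix (Fin n) (Fin n) ℝ} (hA : A.IsHermitian)
    (V : Submodule ℝ (EuclideanSpace ℝ (Fin n)))
    (hV : ∀ x ∈ V, x ≠ 0 → (x : Fin n → ℝ) ⬝ᵥ A *ᵥ (x : Fin n → ℝ) < 0) :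
    finrank ℝ V ≤ (univ.filter fun i => hA.eigenvalues i < 0).card := by
  by_contra hlt
  push_neg at hlt
  set W := eigSpan hA (fun i => 0 ≤ hA.eigenvalues i) with hW
  have hWrank : finrank ℝ W = (univ.filter fun i => 0 ≤ hA.eigenvalues i).card :=
    finrank_eigSpan hA _
  have hcard : (univ.filter fun i => hA.eigenvalues i < 0).card
      + (univ.filter fun i => 0 ≤ hA.eigenvalues i).card = n := by
    have h1 := Finset.card_filter_add_card_filter_not (s := univ)
      (p := fun i => hA.eigenvalues i < 0)
    have h2 : univ.filter (fun i => ¬ hA.eigenvalues i < 0)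
        = univ.filter (fun i => 0 ≤ hA.eigenvalues i) :=
      Finset.filter_congr fun i _ => by simp [not_lt]
    rw [h2] at h1
    simpa using h1
  have hdisj : ¬ Disjoint V W := by
    intro hd
    have := Submodule.finrank_add_finrank_le_of_disjoint hd
    rw [hWrank] at this
    have hn : finrank ℝ (EuclideanSpace ℝ (Fin n)) = n := by simp
    omega
  rw [Submodule.disjoint_def] at hdisj
  push_neg at hdisj
  obtain ⟨x, hxV, hxW, hx0⟩ := hdisj
  exact absurd (quad_nonneg_of_mem hA hxW) (not_le.mpr (hV x hxV hx0))

theorem finrank_le_card_pos {A : Matrix (Fin n) (Fin n) ℝ} (hA : A.IsHermitian)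
    (V : Submodule ℝ (EuclideanSpace ℝ (Fin n)))
    (hV : ∀ x ∈ V, x ≠ 0 → 0 < (x : Fin n → ℝ) ⬝ᵥ A *ᵥ (x : Fin n → ℝ)) :
    finrank ℝ V ≤ (univ.filter fun i => 0 < hA.eigenvalues i).card := by
  by_contra hlt
  push_neg at hlt
  set W := eigSpan hA (fun i => hA.eigenvalues i ≤ 0) with hW
  have hWrank : finrank ℝ W = (univ.filter fun i => hA.eigenvalues i ≤ 0).card :=
    finrank_eigSpan hA _
  have hcard : (univ.filter fun i => 0 < hA.eigenvalues i).card
      + (univ.filter fun i => hA.eigenvalues i ≤ 0).card = n := by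
    have h1 := Finset.card_filter_add_card_filter_not (s := univ)
      (p := fun i => 0 < hA.eigenvalues i)
    have h2 : univ.filter (fun i => ¬ 0 < hA.eigenvalues i)
        = univ.filter (fun i => hA.eigenvalues i ≤ 0) :=
      Finset.filter_congr fun i _ => by simp [not_lt]
    rw [h2] at h1
    simpa using h1
  have hdisj : ¬ Disjoint V W := by
    intro hd
    have := Submodule.finrank_add_finrank_le_of_disjoint hd
    rw [hWrank] at this
    have hn : finrank ℝ (EuclideanSpace ℝ (Fin n)) = n := by simp
    omega
  rw [Submodule.disjoint_def] at hdisj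
  push_neg at hdisj
  obtain ⟨x, hxV, hxW, hx0⟩ := hdisj
  exact absurd (quad_nonpos_of_mem hA hxW) (not_le.mpr (hV x hxV hx0))

/-! ### Perturbation bounds -/

theorem coord_le_norm (x : EuclideanSpace ℝ (Fin n)) (i : Fin n) : |x i| ≤ ‖x‖ := by
  rw [EuclideanSpace.norm_eq, ← Real.sqrt_sq_eq_abs]
  apply Real.sqrt_le_sqrt
  calc x i ^ 2 = ‖x i‖ ^ 2 := by rw [Real.norm_eq_abs, sq_abs]
    _ ≤ ∑ j, ‖x j‖ ^ 2 :=
      Finset.single_le_sum (f := fun j => ‖x j‖ ^ 2) (fun j _ => by positivity) (mem_univ i)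

theorem quad_diff_bound (Δ : Matrix (Fin n) (Fin n) ℝ) {ε : ℝ} (hε : 0 ≤ ε)
    (hΔ : ∀ i j, |Δ i j| ≤ ε)
    (x : EuclideanSpace ℝ (Fin n)) (hx : ‖x‖ = 1) :
    |(x : Fin n → ℝ) ⬝ᵥ Δ *ᵥ (x : Fin n → ℝ)| ≤ (n^2 : ℝ) * ε := by
  have hxi : ∀ i, |x i| ≤ 1 := fun i => hx ▸ coord_le_norm x i
  simp only [dotProduct, mulVec]
  calc |∑ i, x i * ∑ j, Δ i j * x j|
      ≤ ∑ i, |x i * ∑ j, Δ i j * x j| := Finset.abs_sum_le_sum_abs _ _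
    _ ≤ ∑ _i : Fin n, (n : ℝ) * ε := by
        apply Finset.sum_le_sum
        intro i _
        rw [abs_mul]
        calc |x i| * |∑ j, Δ i j * x j| ≤ 1 * |∑ j, Δ i j * x j| := by
              apply mul_le_mul_of_nonneg_right (hxi i) (abs_nonneg _)
          _ = |∑ j, Δ i j * x j| := one_mul _
          _ ≤ ∑ j, |Δ i j * x j| := Finset.abs_sum_le_sum_abs _ _
          _ ≤ ∑ _j : Fin n, ε := by
              apply Finset.sum_le_sum
              intro j _
              rw [abs_mul]
              calc |Δ i j| * |x j| ≤ ε * 1 :=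
                    mul_le_mul (hΔ i j) (hxi j) (abs_nonneg _) hε
                _ = ε := mul_one _
          _ = (n : ℝ) * ε := by simp [mul_comm]
    _ = (n^2 : ℝ) * ε := by simp; ring

/-! ### Semicontinuity -/

theorem semicont_neg {A : Matrix (Fin n) (Fin n) ℝ} (hA : A.IsHermitian) :
    ∃ ε > 0, ∀ B : Matrix (Fin n) (Fin n) ℝ, ∀ hB : B.IsHermitian,
      (∀ i j, |B i j - A i j| ≤ ε) →
      (univ.filter fun i => hA.eigenvalues i < 0).card
        ≤ (univ.filter fun i => hB.eigenvalues i < 0).card := by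
  by_cases hk : (univ.filter fun i => hA.eigenvalues i < 0).card = 0
  · exact ⟨1, one_pos, fun B hB _ => hk ▸ Nat.zero_le _⟩
  set V := eigSpan hA (fun i => hA.eigenvalues i < 0) with hVdef
  have hVrank : finrank ℝ V = (univ.filter fun i => hA.eigenvalues i < 0).card :=
    finrank_eigSpan hA _
  have hVne : V ≠ ⊥ := by
    intro h
    rw [h, finrank_bot] at hVrank
    exact hk hVrank.symm
  obtain ⟨x', hx'V, hx'0⟩ := Submodule.exists_mem_ne_zero_of_ne_bot hVne
  have hu : (‖x'‖⁻¹ • x' : EuclideanSpace ℝ (Fin n)) ∈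
      Metric.sphere (0 : EuclideanSpace ℝ (Fin n)) 1 ∩ V := by
    constructor
    · simp [norm_smul, norm_inv, inv_mul_cancel₀ (norm_ne_zero_iff.mpr hx'0)]
    · exact V.smul_mem _ hx'V
  have hQcont : Continuous fun x : EuclideanSpace ℝ (Fin n) =>
      (x : Fin n → ℝ) ⬝ᵥ A *ᵥ (x : Fin n → ℝ) := by
    simp only [dotProduct, mulVec]
    fun_prop
  have hKcomp : IsCompact (Metric.sphere (0 : EuclideanSpace ℝ (Fin n)) 1 ∩ V) :=
    (isCompact_sphere 0 1).inter_right (Submodule.closed_of_finiteDimensional V)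
  obtain ⟨x₀, hx₀K, hmax⟩ := hKcomp.exists_isMaxOn ⟨_, hu⟩ hQcont.continuousOn
  have hx₀0 : x₀ ≠ 0 := by
    intro h
    have := hx₀K.1
    rw [h] at this
    simp at this
  have hc : (x₀ : Fin n → ℝ) ⬝ᵥ A *ᵥ (x₀ : Fin n → ℝ) < 0 := quad_neg_of_mem hA hx₀K.2 hx₀0
  set c : ℝ := -((x₀ : Fin n → ℝ) ⬝ᵥ A *ᵥ (x₀ : Fin n → ℝ)) with hcdef
  have hcpos : 0 < c := by simpa [hcdef] using hc
  refine ⟨c / (n^2 + 1), by positivity, fun B hB hclose => ?_⟩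
  rw [← hVrank]
  apply finrank_le_card_neg hB V
  have hunit : ∀ x : EuclideanSpace ℝ (Fin n), x ∈ V → ‖x‖ = 1 →
      (x : Fin n → ℝ) ⬝ᵥ B *ᵥ (x : Fin n → ℝ) < 0 := by
    intro x hxV hxn
    have hsplit : (x : Fin n → ℝ) ⬝ᵥ B *ᵥ (x : Fin n → ℝ)
        = (x : Fin n → ℝ) ⬝ᵥ A *ᵥ (x : Fin n → ℝ)
          + (x : Fin n → ℝ) ⬝ᵥ (B - A) *ᵥ (x : Fin n → ℝ) := by
      rw [← dotProduct_add, ← Matrix.add_mulVec, add_sub_cancel]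
    have hQx : (x : Fin n → ℝ) ⬝ᵥ A *ᵥ (x : Fin n → ℝ) ≤ -c := by
      have := hmax (by exact ⟨by simpa using hxn, hxV⟩ :
        x ∈ Metric.sphere (0 : EuclideanSpace ℝ (Fin n)) 1 ∩ V)
      simpa [hcdef] using this
    have hD := quad_diff_bound (B - A) (by positivity) (fun i j => hclose i j) x hxn
    have hD' : (x : Fin n → ℝ) ⬝ᵥ (B - A) *ᵥ (x : Fin n → ℝ) ≤ (n^2 : ℝ) * (c / (n^2+1)) :=
      le_trans (le_abs_self _) hD
    have hdpos : 0 < c / ((n:ℝ)^2+1) := by positivity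
    have hsum : ((n:ℝ)^2) * (c/((n:ℝ)^2+1)) + (c/((n:ℝ)^2+1)) = c := by field_simp
    have hlt : ((n:ℝ)^2) * (c / ((n:ℝ)^2+1)) < c := by linarith
    linarith [hsplit]
  intro x hxV hx0
  have hxpos : (0:ℝ) < ‖x‖ := norm_pos_iff.mpr hx0
  set u : EuclideanSpace ℝ (Fin n) := ‖x‖⁻¹ • x with hudef
  have huV : u ∈ V := V.smul_mem _ hxV
  have hun : ‖u‖ = 1 := by
    simp [hudef, norm_smul, inv_mul_cancel₀ hxpos.ne']
  have hQu := hunit u huV hun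
  obtain ⟨a, hapos, hxau⟩ : ∃ a : ℝ, 0 < a ∧ x = a • u :=
    ⟨‖x‖, hxpos, by rw [hudef, smul_smul, mul_inv_cancel₀ hxpos.ne', one_smul]⟩
  rw [hxau]
  calc ((a • u : EuclideanSpace ℝ (Fin n)) : Fin n → ℝ) ⬝ᵥ
        B *ᵥ ((a • u : EuclideanSpace ℝ (Fin n)) : Fin n → ℝ)
      = a * (a * ((u : Fin n → ℝ) ⬝ᵥ B *ᵥ (u : Fin n → ℝ))) := by
        rw [show ((a • u : EuclideanSpace ℝ (Fin n)) : Fin n → ℝ) = a • (u : Fin n → ℝ) from rfl,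
          smul_dotProduct, Matrix.mulVec_smul, dotProduct_smul]
        simp [smul_eq_mul]
    _ < 0 := mul_neg_of_pos_of_neg hapos (mul_neg_of_pos_of_neg hapos hQu)

theorem semicont_pos {A : Matrix (Fin n) (Fin n) ℝ} (hA : A.IsHermitian) :
    ∃ ε > 0, ∀ B : Matrix (Fin n) (Fin n) ℝ, ∀ hB : B.IsHermitian,
      (∀ i j, |B i j - A i j| ≤ ε) →
      (univ.filter fun i => 0 < hA.eigenvalues i).card
        ≤ (univ.filter fun i => 0 < hB.eigenvalues i).card := by
  by_cases hk : (univ.filter fun i => 0 < hA.eigenvalues i).card = 0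
  · exact ⟨1, one_pos, fun B hB _ => hk ▸ Nat.zero_le _⟩
  set V := eigSpan hA (fun i => 0 < hA.eigenvalues i) with hVdef
  have hVrank : finrank ℝ V = (univ.filter fun i => 0 < hA.eigenvalues i).card :=
    finrank_eigSpan hA _
  have hVne : V ≠ ⊥ := by
    intro h
    rw [h, finrank_bot] at hVrank
    exact hk hVrank.symm
  obtain ⟨x', hx'V, hx'0⟩ := Submodule.exists_mem_ne_zero_of_ne_bot hVne
  have hu : (‖x'‖⁻¹ • x' : EuclideanSpace ℝ (Fin n)) ∈
      Metric.sphere (0 : EuclideanSpace ℝ (Fin n)) 1 ∩ V := by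
    constructor
    · simp [norm_smul, norm_inv, inv_mul_cancel₀ (norm_ne_zero_iff.mpr hx'0)]
    · exact V.smul_mem _ hx'V
  have hQcont : Continuous fun x : EuclideanSpace ℝ (Fin n) =>
      (x : Fin n → ℝ) ⬝ᵥ A *ᵥ (x : Fin n → ℝ) := by
    simp only [dotProduct, mulVec]
    fun_prop
  have hKcomp : IsCompact (Metric.sphere (0 : EuclideanSpace ℝ (Fin n)) 1 ∩ V) :=
    (isCompact_sphere 0 1).inter_right (Submodule.closed_of_finiteDimensional V)
  obtain ⟨x₀, hx₀K, hmin⟩ := hKcomp.exists_isMinOn ⟨_, hu⟩ hQcont.continuousOn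
  have hx₀0 : x₀ ≠ 0 := by
    intro h
    have := hx₀K.1
    rw [h] at this
    simp at this
  have hc : 0 < (x₀ : Fin n → ℝ) ⬝ᵥ A *ᵥ (x₀ : Fin n → ℝ) := quad_pos_of_mem hA hx₀K.2 hx₀0
  set c : ℝ := (x₀ : Fin n → ℝ) ⬝ᵥ A *ᵥ (x₀ : Fin n → ℝ) with hcdef
  have hcpos : 0 < c := hc
  refine ⟨c / (n^2 + 1), by positivity, fun B hB hclose => ?_⟩
  rw [← hVrank]
  apply finrank_le_card_pos hB V
  have hunit : ∀ x : EuclideanSpace ℝ (Fin n), x ∈ V → ‖x‖ = 1 →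
      0 < (x : Fin n → ℝ) ⬝ᵥ B *ᵥ (x : Fin n → ℝ) := by
    intro x hxV hxn
    have hsplit : (x : Fin n → ℝ) ⬝ᵥ B *ᵥ (x : Fin n → ℝ)
        = (x : Fin n → ℝ) ⬝ᵥ A *ᵥ (x : Fin n → ℝ)
          + (x : Fin n → ℝ) ⬝ᵥ (B - A) *ᵥ (x : Fin n → ℝ) := by
      rw [← dotProduct_add, ← Matrix.add_mulVec, add_sub_cancel]
    have hQx : c ≤ (x : Fin n → ℝ) ⬝ᵥ A *ᵥ (x : Fin n → ℝ) := by
      have := hmin (by exact ⟨by simpa using hxn, hxV⟩ :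
        x ∈ Metric.sphere (0 : EuclideanSpace ℝ (Fin n)) 1 ∩ V)
      simpa [hcdef] using this
    have hD := quad_diff_bound (B - A) (by positivity) (fun i j => hclose i j) x hxn
    have hD' : -((n^2 : ℝ) * (c / (n^2+1))) ≤ (x : Fin n → ℝ) ⬝ᵥ (B - A) *ᵥ (x : Fin n → ℝ) :=
      neg_le_of_abs_le hD
    have hdpos : 0 < c / ((n:ℝ)^2+1) := by positivity
    have hsum : ((n:ℝ)^2) * (c/((n:ℝ)^2+1)) + (c/((n:ℝ)^2+1)) = c := by field_simp
    have hlt : ((n:ℝ)^2) * (c / ((n:ℝ)^2+1)) < c := by linarith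
    linarith [hsplit]
  intro x hxV hx0
  have hxpos : (0:ℝ) < ‖x‖ := norm_pos_iff.mpr hx0
  set u : EuclideanSpace ℝ (Fin n) := ‖x‖⁻¹ • x with hudef
  have huV : u ∈ V := V.smul_mem _ hxV
  have hun : ‖u‖ = 1 := by
    simp [hudef, norm_smul, inv_mul_cancel₀ hxpos.ne']
  have hQu := hunit u huV hun
  obtain ⟨a, hapos, hxau⟩ : ∃ a : ℝ, 0 < a ∧ x = a • u :=
    ⟨‖x‖, hxpos, by rw [hudef, smul_smul, mul_inv_cancel₀ hxpos.ne', one_smul]⟩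
  rw [hxau]
  calc ((a • u : EuclideanSpace ℝ (Fin n)) : Fin n → ℝ) ⬝ᵥ
        B *ᵥ ((a • u : EuclideanSpace ℝ (Fin n)) : Fin n → ℝ)
      = a * (a * ((u : Fin n → ℝ) ⬝ᵥ B *ᵥ (u : Fin n → ℝ))) := by
        rw [show ((a • u : EuclideanSpace ℝ (Fin n)) : Fin n → ℝ) = a • (u : Fin n → ℝ) from rfl,
          smul_dotProduct, Matrix.mulVec_smul, dotProduct_smul]
        simp [smul_eq_mul]
    _ > 0 := mul_pos hapos (mul_pos hapos hQu)

/-! ### Counting eigenvalues of fixed sign -/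

theorem trichotomy_card {A : Matrix (Fin n) (Fin n) ℝ} (hA : A.IsHermitian) :
    (univ.filter fun i => hA.eigenvalues i < 0).card
      + (univ.filter fun i => hA.eigenvalues i = 0).card
      + (univ.filter fun i => 0 < hA.eigenvalues i).card = n := by
  have h1 := Finset.card_filter_add_card_filter_not (s := univ)
    (p := fun i => hA.eigenvalues i < 0)
  have h2 := Finset.card_filter_add_card_filter_not
    (s := univ.filter (fun i => ¬ hA.eigenvalues i < 0))
    (p := fun i => hA.eigenvalues i = 0)
  rw [Finset.filter_filter, Finset.filter_filter] at h2
  have e1 : univ.filter (fun i => ¬ hA.eigenvalues i < 0 ∧ hA.eigenvalues i = 0)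
      = univ.filter (fun i => hA.eigenvalues i = 0) :=
    Finset.filter_congr fun i _ =>
      Iff.intro (fun h => h.2) (fun h => ⟨by simp [h], h⟩)
  have e2 : univ.filter (fun i => ¬ hA.eigenvalues i < 0 ∧ ¬ hA.eigenvalues i = 0)
      = univ.filter (fun i => 0 < hA.eigenvalues i) :=
    Finset.filter_congr fun i _ => by
      constructor <;> intro h
      · rcases h with ⟨h1', h2'⟩; cases (not_lt.mp h1').lt_or_eq with
        | inl h => exact h
        | inr h => exact absurd h.symm h2'
      · exact ⟨not_lt.mpr h.le, h.ne'⟩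
  rw [e1, e2] at h2
  simp only [Finset.card_univ, Fintype.card_fin] at h1
  omega

theorem finrank_ker_eq_card_zero {A : Matrix (Fin n) (Fin n) ℝ} (hA : A.IsHermitian) :
    finrank ℝ (LinearMap.ker A.mulVecLin)
      = (univ.filter fun i => hA.eigenvalues i = 0).card := by
  have hrank : A.rank = Fintype.card {i // hA.eigenvalues i ≠ 0} :=
    hA.rank_eq_card_non_zero_eigs
  have hrn : A.rank + finrank ℝ (LinearMap.ker A.mulVecLin) = n := by
    rw [Matrix.rank]
    have := LinearMap.finrank_range_add_finrank_ker A.mulVecLin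
    simpa using this
  have hcards : Fintype.card {i // hA.eigenvalues i ≠ 0}
      = (univ.filter fun i => hA.eigenvalues i ≠ 0).card := Fintype.card_subtype _
  have hsplit := Finset.card_filter_add_card_filter_not (s := univ)
    (p := fun i => hA.eigenvalues i = 0)
  simp only [Finset.card_univ, Fintype.card_fin] at hsplit
  have e3 : (univ.filter fun i => hA.eigenvalues i ≠ 0)
      = univ.filter (fun i => ¬ hA.eigenvalues i = 0) :=
    Finset.filter_congr fun i _ => Iff.rfl
  rw [e3] at hcards
  omega

theorem card_zero_eq_zero_of_det_ne {A : Matrix (Fin n) (Fin n) ℝ} (hA : A.IsHermitian)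
    (hdet : A.det ≠ 0) :
    (univ.filter fun i => hA.eigenvalues i = 0).card = 0 := by
  rw [Finset.card_eq_zero, Finset.filter_eq_empty_iff]
  intro i _ h0
  apply hdet
  rw [hA.det_eq_prod_eigenvalues]
  exact Finset.prod_eq_zero (mem_univ i) (by exact_mod_cast h0)

end Stmt3Aux


theorem stmt3 (n : ℕ) (tstar : ℝ) (htstar : 0 < tstar)
    (H : ℝ → Matrix (Fin n) (Fin n) ℝ)
    (hsym : ∀ t, (H t).IsHermitian)
    (hcont : ∀ i j : Fin n, ContinuousOn (fun t => H t i j) (Set.Icc 0 tstar))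
    (hpsd : (H 0).PosSemidef)
    (S : Finset ℝ)
    (hSsub : ∀ t ∈ S, t ∈ Set.Ico 0 tstar)
    (hSall : ∀ t ∈ Set.Ico (0 : ℝ) tstar, (H t).det = 0 → t ∈ S) :
    (Finset.univ.filter fun i => (hsym tstar).eigenvalues i < 0).card ≤
      ∑ t ∈ S, Module.finrank ℝ (LinearMap.ker (H t).mulVecLin) := by
  classical
  open Stmt3Aux Matrix Module Finset in
  -- notation
  set f : ℝ → ℕ := fun t => (univ.filter fun i => (hsym t).eigenvalues i < 0).card with hfdef
  set g : ℝ → ℕ := fun t => (univ.filter fun i => 0 < (hsym t).eigenvalues i).card with hgdef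
  set z : ℝ → ℕ := fun t => (univ.filter fun i => (hsym t).eigenvalues i = 0).card with hzdef
  set d : ℝ → ℕ := fun t => finrank ℝ (LinearMap.ker (H t).mulVecLin) with hddef
  set R : ℝ → ℕ := fun u => ∑ s ∈ S.filter (fun v => v < u), d s with hRdef
  have hfz : ∀ t, f t + z t + g t = n := fun t => trichotomy_card (hsym t)
  have hdz : ∀ t, d t = z t := fun t => finrank_ker_eq_card_zero (hsym t)
  have hRmono : ∀ u v : ℝ, u ≤ v → R u ≤ R v := by
    intro u v huv
    apply Finset.sum_le_sum_of_subset
    intro s hs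
    rw [Finset.mem_filter] at hs ⊢
    exact ⟨hs.1, lt_of_lt_of_le hs.2 huv⟩
  have hf0 : f 0 = 0 := by
    rw [hfdef]
    simp only [Finset.card_eq_zero, Finset.filter_eq_empty_iff]
    intro i _
    exact not_lt.mpr (hpsd.eigenvalues_nonneg i)
  -- local semicontinuity in t
  have key : ∀ t ∈ Set.Icc (0:ℝ) tstar, ∃ δ > 0, ∀ s ∈ Set.Icc (0:ℝ) tstar,
      |s - t| < δ → f t ≤ f s ∧ g t ≤ g s := by
    intro t ht
    obtain ⟨ε₁, hε₁, hB₁⟩ := semicont_neg (hsym t)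
    obtain ⟨ε₂, hε₂, hB₂⟩ := semicont_pos (hsym t)
    set ε := min ε₁ ε₂ with hεdef
    have hεpos : 0 < ε := lt_min hε₁ hε₂
    have hev : ∀ᶠ s in nhdsWithin t (Set.Icc (0:ℝ) tstar),
        ∀ ij : Fin n × Fin n, |H s ij.1 ij.2 - H t ij.1 ij.2| ≤ ε := by
      rw [Filter.eventually_all]
      intro ij
      have hc := hcont ij.1 ij.2 t ht
      have hp : ∀ᶠ y in nhds (H t ij.1 ij.2), |y - H t ij.1 ij.2| ≤ ε := by
        have := Metric.closedBall_mem_nhds (H t ij.1 ij.2) hεpos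
        filter_upwards [this] with y hy
        rw [Metric.mem_closedBall, Real.dist_eq] at hy
        exact hy
      exact hc.eventually hp
    rw [Filter.Eventually, Metric.mem_nhdsWithin_iff] at hev
    obtain ⟨δ, hδpos, hδ⟩ := hev
    refine ⟨δ, hδpos, fun s hs hst => ?_⟩
    have hclose : ∀ ij : Fin n × Fin n, |H s ij.1 ij.2 - H t ij.1 ij.2| ≤ ε :=
      hδ ⟨by rwa [Metric.mem_ball, Real.dist_eq], hs⟩
    constructor
    · exact hB₁ (H s) (hsym s) (fun i j => le_trans (hclose (i, j)) (min_le_left _ _))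
    · exact hB₂ (H s) (hsym s) (fun i j => le_trans (hclose (i, j)) (min_le_right _ _))
  -- the set of good times
  set T : Set ℝ := {t | t ∈ Set.Icc (0:ℝ) tstar ∧ ∀ u ∈ Set.Icc (0:ℝ) t, f u ≤ R u} with hTdef
  have h0T : (0:ℝ) ∈ T := by
    refine ⟨⟨le_refl 0, htstar.le⟩, fun u hu => ?_⟩
    have : u = 0 := le_antisymm hu.2 hu.1
    rw [this, hf0]
    exact Nat.zero_le _
  have hTne : T.Nonempty := ⟨0, h0T⟩
  have hTbdd : BddAbove T := ⟨tstar, fun t ht => ht.1.2⟩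
  set c := sSup T with hcdef
  have hc0 : 0 ≤ c := le_csSup hTbdd h0T
  have hcts : c ≤ tstar := csSup_le hTne (fun t ht => ht.1.2)
  have hcIcc : c ∈ Set.Icc (0:ℝ) tstar := ⟨hc0, hcts⟩
  obtain ⟨δ, hδpos, hδ⟩ := key c hcIcc
  -- everything up to c is good
  have hgood : ∀ u ∈ Set.Icc (0:ℝ) c, f u ≤ R u := by
    intro u hu
    rcases lt_or_eq_of_le hu.2 with hlt | heq
    · obtain ⟨t', ht'T, ht'⟩ := exists_lt_of_lt_csSup hTne hlt
      exact ht'T.2 u ⟨hu.1, ht'.le⟩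
    · rw [heq]
      rcases eq_or_lt_of_le hc0 with h0 | hpos
      · rw [← h0, hf0]; exact Nat.zero_le _
      · -- pick s slightly below c
        set s := max (c/2) (c - δ/2) with hsdef
        have hs_lt : s < c := by
          apply max_lt
          · linarith
          · linarith
        have hs0 : 0 ≤ s := le_trans (by positivity) (le_max_left _ _)
        have hsIcc : s ∈ Set.Icc (0:ℝ) tstar := ⟨hs0, le_trans hs_lt.le hcts⟩
        have hsd : |s - c| < δ := by
          rw [abs_sub_lt_iff]
          constructor
          · linarith
          · have : c - δ/2 ≤ s := le_max_right _ _
            linarith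
        have hfc := (hδ s hsIcc hsd).1
        have hfs : f s ≤ R s := by
          obtain ⟨t', ht'T, ht'⟩ := exists_lt_of_lt_csSup hTne hs_lt
          exact ht'T.2 s ⟨hs0, ht'.le⟩
        exact le_trans hfc (le_trans hfs (hRmono s c hs_lt.le))
  -- c must be tstar
  have hceq : c = tstar := by
    by_contra hne
    have hclt : c < tstar := lt_of_le_of_ne hcts hne
    -- bound on f near c from the right
    have hjump : ∀ s ∈ Set.Icc (0:ℝ) tstar, |s - c| < δ → f s ≤ f c + z c := by
      intro s hs hsd
      have hg := (hδ s hs hsd).2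
      have h1 := hfz s
      have h2 := hfz c
      omega
    -- z c ≤ contribution of c to R
    set t'' := min (c + δ/2) ((c + tstar)/2) with ht''def
    have ht''c : c < t'' := by
      apply lt_min
      · linarith
      · linarith
    have ht''ts : t'' ≤ tstar := le_trans (min_le_right _ _) (by linarith)
    have ht''T : t'' ∈ T := by
      refine ⟨⟨by linarith, ht''ts⟩, fun u hu => ?_⟩
      rcases le_or_gt u c with huc | huc
      · exact hgood u ⟨hu.1, huc⟩
      · have huIcc : u ∈ Set.Icc (0:ℝ) tstar := ⟨hu.1, le_trans hu.2 ht''ts⟩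
        have hud : |u - c| < δ := by
          rw [abs_sub_lt_iff]
          constructor
          · have : u ≤ t'' := hu.2
            have : t'' ≤ c + δ/2 := min_le_left _ _
            linarith [hu.2]
          · linarith
        have hfu : f u ≤ f c + z c := hjump u huIcc hud
        have hfcRc : f c ≤ R c := hgood c ⟨hc0, le_refl c⟩
        by_cases hdet : (H c).det = 0
        · -- c is a singular time, so c ∈ S
          have hcS : c ∈ S := hSall c ⟨hc0, hclt⟩ hdet
          have hsub : insert c (S.filter (fun v => v < c)) ⊆ S.filter (fun v => v < u) := by
            intro v hv
            rw [Finset.mem_insert] at hv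
            rcases hv with rfl | hv
            · exact Finset.mem_filter.mpr ⟨hcS, huc⟩
            · rw [Finset.mem_filter] at hv ⊢
              exact ⟨hv.1, lt_trans hv.2 huc⟩
          have hsum : R c + d c ≤ R u := by
            have hnotmem : c ∉ S.filter (fun v => v < c) := by
              rw [Finset.mem_filter]
              exact fun h => lt_irrefl c h.2
            calc R c + d c = ∑ s ∈ insert c (S.filter (fun v => v < c)), d s := by
                  rw [Finset.sum_insert hnotmem]
                  simp only [hRdef]
                  omega
              _ ≤ R u := Finset.sum_le_sum_of_subset hsub
          have := hdz c
          omega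
        · have hz0 : z c = 0 := card_zero_eq_zero_of_det_ne (hsym c) hdet
          have := hRmono c u huc.le
          omega
    have := le_csSup hTbdd ht''T
    linarith
  -- conclude
  have hfinal : f tstar ≤ R tstar := by
    rw [← hceq]
    exact hgood c ⟨hc0, le_refl c⟩
  refine le_trans hfinal ?_
  apply Finset.sum_le_sum_of_subset
  exact Finset.filter_subset _ _
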